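/- arXiv:math/0606276 — 2 statements merged into one kernel-verified Lean document; each statement's English description precedes it below -/
import Mathlib

section
/- For real β with 0 < β < 1 and real k·t > 0 and a ∈ ℝ, the improper integral ∫₀^∞ x^{β−1} sin(2π k t (a + x)) dx converges and equals Γ(β)·(2π k t)^{−β}·sin(2π a k t + πβ/2). -/
open Real Filter MeasureTheory Set Topology

namespace IPS


lemma hasDeriv_N (u c a : ℝ) (x : ℝ) :
    HasDerivAt (fun x => -(Real.exp (-(u*x)) * (u * Real.sin (c*(a+x)) + c * Real.cos (c*(a+x)))))
      (Real.exp (-(u*x)) * Real.sin (c*(a+x)) * (u^2+c^2)) x := by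
  have hin : HasDerivAt (fun x : ℝ => c*(a+x)) c x := by
    simpa using ((hasDerivAt_id x).const_add a).const_mul c
  have he : HasDerivAt (fun x : ℝ => Real.exp (-(u*x))) (Real.exp (-(u*x)) * (-u)) x := by
    have : HasDerivAt (fun x : ℝ => -(u*x)) (-u) x := by
      exact (((hasDerivAt_id x).const_mul u).neg).congr_deriv (by simp)
    exact this.exp
  have hs : HasDerivAt (fun x : ℝ => u * Real.sin (c*(a+x)) + c * Real.cos (c*(a+x)))
      (u * (Real.cos (c*(a+x)) * c) + c * (-Real.sin (c*(a+x)) * c)) x :=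
    ((hin.sin).const_mul u).add ((hin.cos).const_mul c)
  have := (he.mul hs).neg
  exact this.congr_deriv (by ring)

lemma integral_exp_sin (u c a B : ℝ) (hc : 0 < c) :
    ∫ x in (0:ℝ)..B, Real.exp (-(u*x)) * Real.sin (c*(a+x)) =
      ((u * Real.sin (c*a) + c * Real.cos (c*a))
        - Real.exp (-(u*B)) * (u * Real.sin (c*(a+B)) + c * Real.cos (c*(a+B)))) / (u^2+c^2) := by
  have hne : (u^2+c^2) ≠ 0 := by positivity
  have key := intervalIntegral.integral_eq_sub_of_hasDerivAt
    (f := fun x => -(Real.exp (-(u*x)) * (u * Real.sin (c*(a+x)) + c * Real.cos (c*(a+x)))) / (u^2+c^2))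
    (f' := fun x => Real.exp (-(u*x)) * Real.sin (c*(a+x)))
    (a := 0) (b := B)
    (fun x _ => by
      have := (hasDeriv_N u c a x).div_const (u^2+c^2)
      simpa [mul_div_assoc, mul_div_cancel_right₀ _ hne] using this)
    (by
      apply Continuous.intervalIntegrable
      continuity)
  rw [key]
  simp only [mul_zero, Real.exp_zero, add_zero, neg_zero]
  field_simp
  ring



variable {β c a B : ℝ}

lemma integrableOn_rpow_exp {x β : ℝ} (hx : 0 < x) (hβ1 : β < 1) :
    IntegrableOn (fun u : ℝ => u ^ (-β) * Real.exp (-(x*u))) (Ioi 0) := by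
  have h := integrableOn_rpow_mul_exp_neg_mul_rpow (p := 1) (s := -β) (b := x)
    (by linarith) one_pos hx
  refine h.congr_fun (fun u hu => ?_) measurableSet_Ioi
  simp only [Real.rpow_one]; ring_nf

lemma rep (hβ1 : β < 1) {x : ℝ} (hx : 0 < x) :
    ∫ u in Ioi (0:ℝ), u ^ (-β) * Real.exp (-(x*u)) = Real.Gamma (1-β) * x ^ (β-1) := by
  have h := Real.integral_rpow_mul_exp_neg_mul_Ioi (a := 1-β) (r := x) (by linarith) hx
  rw [show (1:ℝ)-β-1 = -β by ring] at h
  rw [h, one_div, ← Real.rpow_neg_one x, ← Real.rpow_mul hx.le, mul_comm]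
  congr 1
  ring_nf

lemma integrable_g (hβ : 0 < β) (hβ1 : β < 1) (hB : 0 < B) :
    Integrable (fun p : ℝ × ℝ => p.2 ^ (-β) * Real.exp (-(p.1*p.2)))
      ((volume.restrict (Ioc 0 B)).prod (volume.restrict (Ioi 0))) := by
  have hmeas : AEStronglyMeasurable (fun p : ℝ × ℝ => p.2 ^ (-β) * Real.exp (-(p.1*p.2)))
      ((volume.restrict (Ioc 0 B)).prod (volume.restrict (Ioi 0))) := by
    apply Measurable.aestronglyMeasurable
    fun_prop
  rw [MeasureTheory.integrable_prod_iff hmeas]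
  constructor
  · filter_upwards [ae_restrict_mem measurableSet_Ioc] with x hx
    exact integrableOn_rpow_exp hx.1 hβ1
  · have hInt : Integrable (fun x : ℝ => Real.Gamma (1-β) * x ^ (β-1))
        (volume.restrict (Ioc 0 B)) := by
      have h0 : IntervalIntegrable (fun x : ℝ => x ^ (β-1)) volume 0 B :=
        intervalIntegral.intervalIntegrable_rpow' (by linarith)
      exact ((intervalIntegrable_iff_integrableOn_Ioc_of_le hB.le).mp h0).const_mul _
    refine hInt.congr ?_
    filter_upwards [ae_restrict_mem measurableSet_Ioc] with x hx
    rw [← rep hβ1 hx.1]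
    refine setIntegral_congr_fun measurableSet_Ioi fun u hu => ?_
    have hu' : (0:ℝ) < u := hu
    exact (Real.norm_of_nonneg (by positivity)).symm

lemma integrable_f (hβ : 0 < β) (hβ1 : β < 1) (hB : 0 < B) :
    Integrable (fun p : ℝ × ℝ => (p.2 ^ (-β) * Real.exp (-(p.1*p.2))) * Real.sin (c*(a+p.1)))
      ((volume.restrict (Ioc 0 B)).prod (volume.restrict (Ioi 0))) := by
  refine (integrable_g hβ hβ1 hB).mono ?_ ?_
  · apply Measurable.aestronglyMeasurable; fun_prop
  · refine Eventually.of_forall fun p => ?_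
    rw [norm_mul]
    exact mul_le_of_le_one_right (norm_nonneg _)
      (by rw [Real.norm_eq_abs]; exact Real.abs_sin_le_one _)

lemma fubini_step (hβ : 0 < β) (hβ1 : β < 1) (hc : 0 < c) (hB : 0 < B) :
    ∫ x in (0:ℝ)..B, x ^ (β-1) * Real.sin (c*(a+x)) =
      (Real.Gamma (1-β))⁻¹ * ∫ u in Ioi (0:ℝ), u ^ (-β) *
          ∫ x in (0:ℝ)..B, Real.exp (-(u*x)) * Real.sin (c*(a+x)) := by
  have hΓ : Real.Gamma (1-β) ≠ 0 := (Real.Gamma_pos_of_pos (by linarith)).ne'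
  have swap := MeasureTheory.integral_integral_swap
    (f := fun x u => (u ^ (-β) * Real.exp (-(x*u))) * Real.sin (c*(a+x)))
    (μ := volume.restrict (Ioc 0 B)) (ν := volume.restrict (Ioi 0))
    (integrable_f hβ hβ1 hB)
  rw [intervalIntegral.integral_of_le hB.le]
  calc ∫ x in Ioc (0:ℝ) B, x ^ (β-1) * Real.sin (c*(a+x))
      = ∫ x in Ioc (0:ℝ) B, (Real.Gamma (1-β))⁻¹ *
          ∫ u in Ioi (0:ℝ), (u ^ (-β) * Real.exp (-(x*u))) * Real.sin (c*(a+x)) := by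
        refine setIntegral_congr_fun measurableSet_Ioc fun x hx => ?_
        rw [integral_mul_const, rep hβ1 hx.1]
        field_simp
    _ = (Real.Gamma (1-β))⁻¹ * ∫ x in Ioc (0:ℝ) B,
          ∫ u in Ioi (0:ℝ), (u ^ (-β) * Real.exp (-(x*u))) * Real.sin (c*(a+x)) :=
        integral_const_mul _ _
    _ = (Real.Gamma (1-β))⁻¹ * ∫ u in Ioi (0:ℝ), ∫ x in Ioc (0:ℝ) B,
          (u ^ (-β) * Real.exp (-(x*u))) * Real.sin (c*(a+x)) := by rw [swap]
    _ = _ := by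
        congr 1
        refine setIntegral_congr_fun measurableSet_Ioi fun u hu => ?_
        rw [intervalIntegral.integral_of_le hB.le, ← integral_const_mul]
        refine setIntegral_congr_fun measurableSet_Ioc fun x hx => ?_
        rw [mul_comm x u]
        ring



lemma integrableOn_rpow_div {s c : ℝ} (hs : 0 < s) (hs2 : s < 2) (hc : 0 < c) :
    IntegrableOn (fun v : ℝ => v ^ (s-1) / (v^2 + c^2)) (Ioi 0) := by
  have hc2 : (0:ℝ) < c^2 := pow_pos hc 2
  have hsplit : Ioc (0:ℝ) 1 ∪ Ioi 1 = Ioi 0 := Ioc_union_Ioi_eq_Ioi zero_le_one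
  rw [← hsplit]
  refine IntegrableOn.union ?_ ?_
  · have hg : IntegrableOn (fun v : ℝ => v ^ (s-1) / c^2) (Ioc 0 1) := by
      have h0 : IntervalIntegrable (fun x : ℝ => x ^ (s-1)) volume 0 1 :=
        intervalIntegral.intervalIntegrable_rpow' (by linarith)
      exact ((intervalIntegrable_iff_integrableOn_Ioc_of_le zero_le_one).mp h0).div_const _
    refine hg.mono' (Measurable.aestronglyMeasurable (by fun_prop)) ?_
    filter_upwards [ae_restrict_mem measurableSet_Ioc] with v hv
    have hv' : (0:ℝ) < v := hv.1
    rw [Real.norm_of_nonneg (by positivity)]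
    apply div_le_div_of_nonneg_left (by positivity) hc2 (by nlinarith)
  · have hg : IntegrableOn (fun v : ℝ => v ^ (s-3)) (Ioi 1) :=
      integrableOn_Ioi_rpow_of_lt (by linarith) one_pos
    refine hg.mono' (Measurable.aestronglyMeasurable (by fun_prop)) ?_
    filter_upwards [ae_restrict_mem measurableSet_Ioi] with v hv
    have hv' : (0:ℝ) < v := lt_trans one_pos hv
    have hv2 : (0:ℝ) < v^2 := pow_pos hv' 2
    rw [Real.norm_of_nonneg (by positivity)]
    have h1 : v ^ (s-1) / (v^2 + c^2) ≤ v ^ (s-1) / v^2 :=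
      div_le_div_of_nonneg_left (by positivity) hv2 (by nlinarith)
    refine h1.trans_eq ?_
    rw [← Real.rpow_natCast v 2, ← Real.rpow_sub hv']
    congr 1
    push_cast
    ring

lemma integral_exp_neg_b {b : ℝ} (hb : 0 < b) :
    ∫ w in Ioi (0:ℝ), Real.exp (-(b*w)) = 1/b := by
  have h := integral_exp_neg_mul_rpow one_pos hb
  simp only [Real.rpow_one] at h
  rw [show (fun w : ℝ => Real.exp (-(b*w))) = fun w : ℝ => Real.exp (-b*w) by
    funext w; rw [neg_mul]]
  rw [h]
  norm_num [Real.Gamma_two, Real.rpow_neg_one]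

lemma integrable_h {s : ℝ} (hs : 0 < s) (hs2 : s < 2) :
    Integrable (fun p : ℝ × ℝ => p.1 ^ (s-1) * Real.exp (-((1+p.1^2)*p.2)))
      ((volume.restrict (Ioi 0)).prod (volume.restrict (Ioi 0))) := by
  have hmeas : AEStronglyMeasurable (fun p : ℝ × ℝ => p.1 ^ (s-1) * Real.exp (-((1+p.1^2)*p.2)))
      ((volume.restrict (Ioi 0)).prod (volume.restrict (Ioi 0))) :=
    Measurable.aestronglyMeasurable (by fun_prop)
  rw [MeasureTheory.integrable_prod_iff hmeas]
  constructor
  · filter_upwards [ae_restrict_mem measurableSet_Ioi] with v hv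
    have hb : (0:ℝ) < 1 + v^2 := by positivity
    have h1 := (exp_neg_integrableOn_Ioi 0 hb)
    simp only [neg_mul] at h1
    exact h1.const_mul (v ^ (s-1))
  · have hI : IntegrableOn (fun v : ℝ => v ^ (s-1) / (v^2 + 1^2)) (Ioi 0) :=
      integrableOn_rpow_div hs hs2 one_pos
    refine (hI.congr ?_)
    filter_upwards [ae_restrict_mem measurableSet_Ioi] with v hv
    have hv' : (0:ℝ) < v := hv
    have hb : (0:ℝ) < 1 + v^2 := by positivity
    calc v ^ (s-1) / (v^2 + 1^2)
        = v ^ (s-1) * (1/(1+v^2)) := by rw [mul_one_div]; ring_nf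
      _ = v ^ (s-1) * ∫ w in Ioi (0:ℝ), Real.exp (-((1+v^2)*w)) := by rw [integral_exp_neg_b hb]
      _ = ∫ w in Ioi (0:ℝ), v ^ (s-1) * Real.exp (-((1+v^2)*w)) := (integral_const_mul _ _).symm
      _ = ∫ w in Ioi (0:ℝ), ‖v ^ (s-1) * Real.exp (-((1+v^2)*w))‖ := by
          refine setIntegral_congr_fun measurableSet_Ioi fun w hw => ?_
          rw [Real.norm_of_nonneg (by positivity)]

lemma integral_rpow_div_one_add_sq {s : ℝ} (hs : 0 < s) (hs2 : s < 2) :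
    ∫ v in Ioi (0:ℝ), v ^ (s-1) / (1 + v^2) = π / (2 * Real.sin (π * s / 2)) := by
  have swap := MeasureTheory.integral_integral_swap
    (f := fun v w => v ^ (s-1) * Real.exp (-((1+v^2)*w)))
    (μ := volume.restrict (Ioi 0)) (ν := volume.restrict (Ioi 0))
    (integrable_h hs hs2)
  have lhs : (∫ v in Ioi (0:ℝ), ∫ w in Ioi (0:ℝ), v ^ (s-1) * Real.exp (-((1+v^2)*w)))
      = ∫ v in Ioi (0:ℝ), v ^ (s-1) / (1 + v^2) := by
    refine setIntegral_congr_fun measurableSet_Ioi fun v hv => ?_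
    have hv' : (0:ℝ) < v := hv
    have hb : (0:ℝ) < 1 + v^2 := by positivity
    rw [integral_const_mul, integral_exp_neg_b hb, mul_one_div]
  have rhs : (∫ w in Ioi (0:ℝ), ∫ v in Ioi (0:ℝ), v ^ (s-1) * Real.exp (-((1+v^2)*w)))
      = (1/2) * Real.Gamma (s/2) * Real.Gamma (1-s/2) := by
    have step1 : (∫ w in Ioi (0:ℝ), ∫ v in Ioi (0:ℝ), v ^ (s-1) * Real.exp (-((1+v^2)*w)))
        = ∫ w in Ioi (0:ℝ), ((1/2) * Real.Gamma (s/2)) * (w ^ ((1-s/2)-1) * Real.exp (-(1*w))) := by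
      refine setIntegral_congr_fun measurableSet_Ioi fun w hw => ?_
      have hw' : (0:ℝ) < w := hw
      have h2 := integral_rpow_mul_exp_neg_mul_rpow (p := 2) (q := s-1) (b := w)
        two_pos (by linarith) hw'
      calc (∫ v in Ioi (0:ℝ), v ^ (s-1) * Real.exp (-((1+v^2)*w)))
          = ∫ v in Ioi (0:ℝ), Real.exp (-w) * (v ^ (s-1) * Real.exp (-w * v ^ (2:ℝ))) := by
            refine setIntegral_congr_fun measurableSet_Ioi fun v hv => ?_
            rw [show v ^ (2:ℝ) = v^2 by
              rw [show ((2:ℝ)) = ((2:ℕ):ℝ) by norm_num, Real.rpow_natCast]]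
            rw [show -((1+v^2)*w) = -w + -(w*v^2) by ring, Real.exp_add]
            ring
        _ = Real.exp (-w) * (w ^ (-(s-1+1)/2) * (1/2) * Real.Gamma ((s-1+1)/2)) := by
            rw [integral_const_mul, h2]
        _ = ((1/2) * Real.Gamma (s/2)) * (w ^ ((1-s/2)-1) * Real.exp (-(1*w))) := by
            rw [show (s-1+1)/2 = s/2 by ring, show -(s-1+1)/2 = (1-s/2)-1 by ring,
              show -(1*w) = -w by ring]
            ring
    rw [step1, integral_const_mul,
      Real.integral_rpow_mul_exp_neg_mul_Ioi (by linarith : (0:ℝ) < 1-s/2) one_pos]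
    norm_num
  rw [← lhs, swap, rhs, mul_assoc, Real.Gamma_mul_Gamma_one_sub (s/2),
    show π * s / 2 = π * (s/2) by ring]
  ring

lemma integral_K {s c : ℝ} (hs : 0 < s) (hs2 : s < 2) (hc : 0 < c) :
    ∫ u in Ioi (0:ℝ), u ^ (s-1) / (u^2 + c^2)
      = c ^ (s-2) * (π / (2 * Real.sin (π * s / 2))) := by
  have h := integral_comp_mul_left_Ioi (g := fun u : ℝ => u ^ (s-1) / (u^2 + c^2)) 0 hc
  simp only [mul_zero, smul_eq_mul] at h
  have h2 : (∫ x in Ioi (0:ℝ), (c*x) ^ (s-1) / ((c*x)^2 + c^2))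
      = c ^ (s-3) * ∫ v in Ioi (0:ℝ), v ^ (s-1) / (1 + v^2) := by
    rw [← integral_const_mul]
    refine setIntegral_congr_fun measurableSet_Ioi fun x hx => ?_
    have hx' : (0:ℝ) < x := hx
    rw [Real.mul_rpow hc.le hx'.le]
    rw [show (c*x)^2 + c^2 = c^2 * (1 + x^2) by ring]
    rw [show c ^ (s-1) = c ^ (s-3) * c ^ (2:ℝ) by
      rw [← Real.rpow_add hc]; congr 1; ring]
    rw [show c ^ (2:ℝ) = c^2 by
      rw [show ((2:ℝ)) = ((2:ℕ):ℝ) by norm_num, Real.rpow_natCast]]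
    have hc' : c ≠ 0 := hc.ne'
    have hx2 : (1:ℝ)+x^2 ≠ 0 := by positivity
    field_simp
  rw [h2, integral_rpow_div_one_add_sq hs hs2] at h
  have hc' : c ≠ 0 := hc.ne'
  have h3 := congrArg (fun y : ℝ => c * y) h
  simp only [← mul_assoc, mul_inv_cancel₀ hc', one_mul] at h3
  rw [← h3]
  rw [show c ^ (s-2) = c * (c^(s-3)) by
    nth_rewrite 1 [show s-2 = 1+(s-3) by ring]
    rw [Real.rpow_add hc, Real.rpow_one]]


variable {β c a B : ℝ}

lemma bound_integrable (hβ : 0 < β) (hβ1 : β < 1) (hc : 0 < c) :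
    IntegrableOn (fun u : ℝ => u ^ (-β) * (2*(u+c)/(u^2+c^2))) (Ioi 0) := by
  have h1 := ((integrableOn_rpow_div (s := 2-β) (by linarith) (by linarith) hc).const_mul 2)
  have h2 := ((integrableOn_rpow_div (s := 1-β) (by linarith) (by linarith) hc).const_mul (2*c))
  refine (h1.add h2).congr ?_
  filter_upwards [ae_restrict_mem measurableSet_Ioi] with u hu
  have hu' : (0:ℝ) < u := hu
  have e1 : u ^ ((2-β)-1) = u * u ^ (-β) := by
    rw [show (2:ℝ)-β-1 = 1 + -β by ring, Real.rpow_add hu', Real.rpow_one]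
  have e2 : u ^ ((1-β)-1) = u ^ (-β) := by rw [show (1:ℝ)-β-1 = -β by ring]
  have hd : u^2 + c^2 ≠ 0 := by positivity
  simp only [Pi.add_apply]
  rw [e1, e2]
  field_simp

lemma pointwise_lim (hc : 0 < c) {u : ℝ} (hu : 0 < u) :
    Tendsto (fun B : ℝ => u ^ (-β) *
        (((u * Real.sin (c*a) + c * Real.cos (c*a))
          - Real.exp (-(u*B)) * (u * Real.sin (c*(a+B)) + c * Real.cos (c*(a+B)))) / (u^2+c^2)))
      atTop
      (𝓝 (u ^ (-β) * ((u * Real.sin (c*a) + c * Real.cos (c*a)) / (u^2+c^2)))) := by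
  have hexp : Tendsto (fun B : ℝ => Real.exp (-u*B)) atTop (𝓝 0) :=
    Real.tendsto_exp_atBot.comp (tendsto_id.const_mul_atTop_of_neg (by linarith))
  have h0 : Tendsto (fun B : ℝ =>
      Real.exp (-(u*B)) * (u * Real.sin (c*(a+B)) + c * Real.cos (c*(a+B)))) atTop (𝓝 0) := by
    have hb : Tendsto (fun B : ℝ => (u+c) * Real.exp (-u*B)) atTop (𝓝 0) := by
      simpa using hexp.const_mul (u+c)
    refine squeeze_zero_norm (fun B => ?_) hb
    rw [norm_mul, Real.norm_eq_abs, Real.norm_eq_abs, Real.abs_exp, neg_mul]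
    have hYb : |u * Real.sin (c*(a+B)) + c * Real.cos (c*(a+B))| ≤ u + c := by
      have t1 := abs_add_le (u * Real.sin (c*(a+B))) (c * Real.cos (c*(a+B)))
      rw [abs_mul, abs_mul, abs_of_pos hu, abs_of_pos hc] at t1
      nlinarith [Real.abs_sin_le_one (c*(a+B)), Real.abs_cos_le_one (c*(a+B))]
    rw [mul_comm]
    exact mul_le_mul_of_nonneg_right hYb (Real.exp_pos _).le
  have := (((tendsto_const_nhds
      (x := u * Real.sin (c*a) + c * Real.cos (c*a)) (f := atTop)).sub h0).div_const
      (u^2+c^2)).const_mul (u ^ (-β))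
  simpa using this

lemma lim_inner (hβ : 0 < β) (hβ1 : β < 1) (hc : 0 < c) :
    Tendsto (fun B : ℝ => ∫ u in Ioi (0:ℝ), u ^ (-β) *
        ∫ x in (0:ℝ)..B, Real.exp (-(u*x)) * Real.sin (c*(a+x)))
      atTop
      (𝓝 (∫ u in Ioi (0:ℝ), u ^ (-β) *
        ((u * Real.sin (c*a) + c * Real.cos (c*a)) / (u^2+c^2)))) := by
  have hrw : ∀ u B : ℝ, (∫ x in (0:ℝ)..B, Real.exp (-(u*x)) * Real.sin (c*(a+x)))
      = ((u * Real.sin (c*a) + c * Real.cos (c*a))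
          - Real.exp (-(u*B)) * (u * Real.sin (c*(a+B)) + c * Real.cos (c*(a+B)))) / (u^2+c^2) :=
    fun u B => integral_exp_sin u c a B hc
  simp only [hrw]
  refine MeasureTheory.tendsto_integral_filter_of_dominated_convergence
    (bound := fun u : ℝ => u ^ (-β) * (2*(u+c)/(u^2+c^2))) ?_ ?_ ?_ ?_
  · refine Eventually.of_forall fun B => ?_
    apply Measurable.aestronglyMeasurable
    fun_prop
  · filter_upwards [eventually_ge_atTop (0:ℝ)] with B hB
    filter_upwards [ae_restrict_mem measurableSet_Ioi] with u hu
    have hu' : (0:ℝ) < u := hu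
    have hd : (0:ℝ) < u^2 + c^2 := by positivity
    rw [norm_mul, Real.norm_eq_abs, Real.norm_eq_abs, abs_of_nonneg (by positivity :
      (0:ℝ) ≤ u ^ (-β))]
    refine mul_le_mul_of_nonneg_left ?_ (by positivity)
    rw [abs_div, abs_of_pos hd]
    rw [div_le_div_iff_of_pos_right hd]
    have hX : |u * Real.sin (c*a) + c * Real.cos (c*a)| ≤ u + c := by
      have t1 := abs_add_le (u * Real.sin (c*a)) (c * Real.cos (c*a))
      rw [abs_mul, abs_mul, abs_of_pos hu', abs_of_pos hc] at t1
      nlinarith [Real.abs_sin_le_one (c*a), Real.abs_cos_le_one (c*a)]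
    have hY : |u * Real.sin (c*(a+B)) + c * Real.cos (c*(a+B))| ≤ u + c := by
      have t1 := abs_add_le (u * Real.sin (c*(a+B))) (c * Real.cos (c*(a+B)))
      rw [abs_mul, abs_mul, abs_of_pos hu', abs_of_pos hc] at t1
      nlinarith [Real.abs_sin_le_one (c*(a+B)), Real.abs_cos_le_one (c*(a+B))]
    have hE : Real.exp (-(u*B)) ≤ 1 := Real.exp_le_one_iff.mpr (by nlinarith)
    calc |u * Real.sin (c*a) + c * Real.cos (c*a)
          - Real.exp (-(u*B)) * (u * Real.sin (c*(a+B)) + c * Real.cos (c*(a+B)))|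
        ≤ |u * Real.sin (c*a) + c * Real.cos (c*a)|
          + |Real.exp (-(u*B)) * (u * Real.sin (c*(a+B)) + c * Real.cos (c*(a+B)))| :=
          abs_sub _ _
      _ ≤ 2*(u+c) := by
          rw [abs_mul, Real.abs_exp]
          nlinarith [Real.exp_pos (-(u*B)),
            abs_nonneg (u * Real.sin (c*(a+B)) + c * Real.cos (c*(a+B)))]
  · exact bound_integrable hβ hβ1 hc
  · filter_upwards [ae_restrict_mem measurableSet_Ioi] with u hu
    exact pointwise_lim hc hu

lemma L_value (hβ : 0 < β) (hβ1 : β < 1) (hc : 0 < c) :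
    (∫ u in Ioi (0:ℝ), u ^ (-β) *
        ((u * Real.sin (c*a) + c * Real.cos (c*a)) / (u^2+c^2)))
      = Real.sin (c*a) * (c ^ (-β) * (π / (2 * Real.sin (π * β / 2))))
        + c * Real.cos (c*a) * (c ^ (-β-1) * (π / (2 * Real.cos (π * β / 2)))) := by
  have i1 := (integrableOn_rpow_div (s := 2-β) (by linarith) (by linarith) hc).const_mul
    (Real.sin (c*a))
  have i2 := (integrableOn_rpow_div (s := 1-β) (by linarith) (by linarith) hc).const_mul
    (c * Real.cos (c*a))
  have hsplit : (∫ u in Ioi (0:ℝ), u ^ (-β) *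
      ((u * Real.sin (c*a) + c * Real.cos (c*a)) / (u^2+c^2)))
      = ∫ u in Ioi (0:ℝ), (Real.sin (c*a) * (u ^ ((2-β)-1) / (u^2+c^2))
          + (c * Real.cos (c*a)) * (u ^ ((1-β)-1) / (u^2+c^2))) := by
    refine setIntegral_congr_fun measurableSet_Ioi fun u hu => ?_
    have hu' : (0:ℝ) < u := hu
    have e1 : u ^ ((2-β)-1) = u * u ^ (-β) := by
      rw [show (2:ℝ)-β-1 = 1 + -β by ring, Real.rpow_add hu', Real.rpow_one]
    have e2 : u ^ ((1-β)-1) = u ^ (-β) := by rw [show (1:ℝ)-β-1 = -β by ring]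
    have hd : u^2 + c^2 ≠ 0 := by positivity
    rw [e1, e2]
    field_simp
  rw [hsplit, integral_add i1 i2, integral_const_mul, integral_const_mul,
    integral_K (by linarith) (by linarith) hc, integral_K (by linarith) (by linarith) hc]
  have es1 : Real.sin (π * (2-β) / 2) = Real.sin (π * β / 2) := by
    rw [show π * (2-β) / 2 = π - π * β / 2 by ring, Real.sin_pi_sub]
  have es2 : Real.sin (π * (1-β) / 2) = Real.cos (π * β / 2) := by
    rw [show π * (1-β) / 2 = π/2 - π * β / 2 by ring, Real.sin_pi_div_two_sub]
  rw [es1, es2, show (2:ℝ)-β-2 = -β by ring, show (1:ℝ)-β-2 = -β-1 by ring]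

end IPS

open IPS MeasureTheory Set in
theorem improper_integral_power_sine (β k t a : ℝ) (hβ : 0 < β) (hβ1 : β < 1)
    (hkt : 0 < k * t) :
    Filter.Tendsto (fun B : ℝ => ∫ x in (0:ℝ)..B, x ^ (β - 1) * Real.sin (2 * π * k * t * (a + x)))
      Filter.atTop
      (nhds (Real.Gamma β * (2 * π * k * t) ^ (-β) * Real.sin (2 * π * a * k * t + π * β / 2))) := by
  have hπ := Real.pi_pos
  set c : ℝ := 2 * π * k * t with hcdef
  have hc : 0 < c := by rw [hcdef]; nlinarith
  have hΓ : (0:ℝ) < Real.Gamma (1-β) := Real.Gamma_pos_of_pos (by linarith)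
  have hS : (0:ℝ) < Real.sin (π * β / 2) := by
    apply Real.sin_pos_of_pos_of_lt_pi <;> nlinarith
  have hC : (0:ℝ) < Real.cos (π * β / 2) := by
    apply Real.cos_pos_of_mem_Ioo
    constructor
    · nlinarith
    · nlinarith
  have key : Tendsto (fun B : ℝ => (Real.Gamma (1-β))⁻¹ *
      ∫ u in Ioi (0:ℝ), u ^ (-β) * ∫ x in (0:ℝ)..B, Real.exp (-(u*x)) * Real.sin (c*(a+x)))
      atTop (𝓝 ((Real.Gamma (1-β))⁻¹ *
        ∫ u in Ioi (0:ℝ), u ^ (-β) *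
          ((u * Real.sin (c*a) + c * Real.cos (c*a)) / (u^2+c^2)))) :=
    (lim_inner (a := a) hβ hβ1 hc).const_mul _
  have heq : (fun B : ℝ => ∫ x in (0:ℝ)..B, x ^ (β - 1) * Real.sin (c * (a + x)))
      =ᶠ[atTop] (fun B : ℝ => (Real.Gamma (1-β))⁻¹ *
        ∫ u in Ioi (0:ℝ), u ^ (-β) * ∫ x in (0:ℝ)..B, Real.exp (-(u*x)) * Real.sin (c*(a+x))) := by
    filter_upwards [eventually_gt_atTop (0:ℝ)] with B hB
    exact fubini_step hβ hβ1 hc hB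
  have hval : (Real.Gamma (1-β))⁻¹ *
      (∫ u in Ioi (0:ℝ), u ^ (-β) *
          ((u * Real.sin (c*a) + c * Real.cos (c*a)) / (u^2+c^2)))
      = Real.Gamma β * c ^ (-β) * Real.sin (2 * π * a * k * t + π * β / 2) := by
    rw [L_value hβ hβ1 hc]
    have hca : 2 * π * a * k * t = c * a := by rw [hcdef]; ring
    rw [hca, Real.sin_add]
    have h2sc : Real.sin (π*β) = 2 * Real.sin (π*β/2) * Real.cos (π*β/2) := by
      rw [show π*β = 2*(π*β/2) by ring, Real.sin_two_mul]; ring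
    have hsinpos : (0:ℝ) < Real.sin (π*β) := by rw [h2sc]; positivity
    have hΓβ : Real.Gamma β = π / (Real.sin (π*β) * Real.Gamma (1-β)) := by
      rw [eq_div_iff (by positivity)]
      calc Real.Gamma β * (Real.sin (π*β) * Real.Gamma (1-β))
          = Real.Gamma β * Real.Gamma (1-β) * Real.sin (π*β) := by ring
        _ = π := by rw [Real.Gamma_mul_Gamma_one_sub β, div_mul_cancel₀ _ hsinpos.ne']
    have ec : c ^ (-β-1) * c = c ^ (-β) := by
      have h := Real.rpow_add hc (-β-1) 1
      rw [Real.rpow_one] at h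
      rw [← h]
      congr 1
      ring
    rw [hΓβ, h2sc, ← ec]
    field_simp
    rw [show β * π / 2 = π * β / 2 by ring, div_add_div _ _ hS.ne' hC.ne']
  rw [← hval]
  exact key.congr' heq.symm
end

section
/- Let f : [a₁, a₂] → ℝ with f(x) behaving like d·|x − a|^α near a boundary point a (i.e. f(x) = ∑_{j≥1} d_j |x−a|^{αj} with d₁ ≠ 0, 0 < α ≤ 1/2, convergent power series in |x−a|^α). With x and u connected by u = f'(x)/(x f'(x) − f(x)) and h(u) = −u/f'(x), one has h(u) ≍ |x − a|^{1−α} and h'(u) ≍ |x − a|^{−α} as x → a; consequently h(u)·h'(u) ≍ |x − a|^{1−2α} stays bounded as x → a. -/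
open Set Filter
open scoped ENNReal NNReal Topology

set_option maxHeartbeats 2000000


private lemma exists_F (α a : ℝ) (hα : 0 < α) (f : ℝ → ℝ) (d : ℕ → ℝ) (δ₀ : ℝ) (hδ₀ : 0 < δ₀)
    (hf : ∀ x ∈ Set.Ioo a (a + δ₀),
      HasSum (fun j : ℕ => d (j + 1) * |x - a| ^ (α * (j + 1))) (f x)) :
    ∃ F : ℝ → ℝ, ∃ r : ℝ, 0 < r ∧ AnalyticOnNhd ℝ F (Metric.ball 0 r) ∧ F 0 = 0 ∧
      deriv F 0 = d 1 ∧ (∀ x ∈ Set.Ioo a (a + δ₀), f x = F ((x - a) ^ α)) := by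
  classical
  set c : ℕ → ℝ := fun n => if n = 0 then 0 else d n with hc
  set p : FormalMultilinearSeries ℝ ℝ ℝ := FormalMultilinearSeries.ofScalars ℝ c with hp
  -- the basic HasSum statement
  have hsum : ∀ x ∈ Set.Ioo a (a + δ₀), HasSum (fun n : ℕ => c n * ((x - a) ^ α) ^ n) (f x) := by
    intro x hx
    have ht : 0 < x - a := sub_pos.mpr hx.1
    have key : (fun n : ℕ => c (n + 1) * ((x - a) ^ α) ^ (n + 1))
        = fun j : ℕ => d (j + 1) * |x - a| ^ (α * (j + 1)) := by
      funext j
      have h1 : ((j : ℝ) + 1) = ((j + 1 : ℕ) : ℝ) := by push_cast; ring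
      rw [abs_of_pos ht, hc]
      simp only [Nat.add_eq_zero, and_false, if_false]
      rw [h1, Real.rpow_mul ht.le, Real.rpow_natCast]
      simp
    have h2 : HasSum (fun n : ℕ => c (n + 1) * ((x - a) ^ α) ^ (n + 1)) (f x) := by
      rw [key]; exact hf x hx
    have h3 := (hasSum_nat_add_iff (f := fun n : ℕ => c n * ((x - a) ^ α) ^ n) 1).mp h2
    simpa [hc] using h3
  -- radius positive
  set t₀ : ℝ := min δ₀ 1 / 2 with ht₀
  have ht₀pos : 0 < t₀ := by positivity
  have hx₀ : a + t₀ ∈ Set.Ioo a (a + δ₀) := by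
    constructor
    · linarith
    · have : t₀ < δ₀ := by
        have : min δ₀ 1 ≤ δ₀ := min_le_left _ _
        simp only [ht₀]; linarith
      linarith
  set s₀ : ℝ := (a + t₀ - a) ^ α with hs₀
  have hs₀pos : 0 < s₀ := by
    rw [hs₀]; apply Real.rpow_pos_of_pos; simpa using ht₀pos
  have hsummable := (hsum _ hx₀).summable
  have hb : ∃ C : ℝ, ∀ n : ℕ, ‖c n * s₀ ^ n‖ ≤ C := by
    have h0 := hsummable.tendsto_atTop_zero.norm
    simp only [norm_zero] at h0
    have := h0.bddAbove_range
    obtain ⟨C, hC⟩ := this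
    exact ⟨C, fun n => hC (Set.mem_range_self n)⟩
  obtain ⟨C, hC⟩ := hb
  have hrad : 0 < p.radius := by
    have hle : (s₀.toNNReal : ℝ≥0∞) ≤ p.radius := by
      apply p.le_radius_of_bound C
      intro n
      have : ‖p n‖ = |c n| := by
        rw [hp, FormalMultilinearSeries.ofScalars_norm]; rfl
      rw [this, Real.coe_toNNReal _ hs₀pos.le]
      calc |c n| * s₀ ^ n = ‖c n * s₀ ^ n‖ := by
            rw [norm_mul, Real.norm_eq_abs, Real.norm_eq_abs, abs_pow,
              abs_of_pos hs₀pos]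
        _ ≤ C := hC n
    refine lt_of_lt_of_le ?_ hle
    simpa using hs₀pos
  have hFP : HasFPowerSeriesOnBall p.sum p 0 p.radius := p.hasFPowerSeriesOnBall hrad
  -- choose a real radius
  obtain ⟨r, hrpos, hrle⟩ : ∃ r : ℝ, 0 < r ∧ ENNReal.ofReal r ≤ p.radius := by
    rcases ENNReal.lt_iff_exists_real_btwn.mp hrad with ⟨r, -, h0r, hrrad⟩
    exact ⟨r, by exact_mod_cast (ENNReal.ofReal_pos.mp (by simpa using h0r)), hrrad.le⟩
  refine ⟨p.sum, r, hrpos, ?_, ?_, ?_, ?_⟩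
  · have hsub : Metric.ball (0:ℝ) r ⊆ Metric.eball 0 p.radius := by
      intro y hy
      rw [Metric.mem_eball, edist_dist]
      exact lt_of_lt_of_le (by rwa [ENNReal.ofReal_lt_ofReal_iff_of_nonneg dist_nonneg, ← Metric.mem_ball]) hrle
    exact fun y hy => (hFP.analyticOnNhd) _ (hsub hy)
  · have := hFP.hasFPowerSeriesAt.coeff_zero (fun _ => (1:ℝ))
    rw [← this, hp, FormalMultilinearSeries.ofScalars_apply_eq]
    simp [hc]
  · have := hFP.hasFPowerSeriesAt.deriv
    rw [this, hp, FormalMultilinearSeries.ofScalars_apply_eq]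
    simp [hc]
  · intro x hx
    have h1 := hsum x hx
    have h2 : (fun n : ℕ => p n fun _ => (x - a) ^ α) = fun n : ℕ => c n * ((x - a) ^ α) ^ n := by
      funext n
      rw [hp, FormalMultilinearSeries.ofScalars_apply_eq, smul_eq_mul]
    rw [FormalMultilinearSeries.sum, h2]
    exact h1.tsum_eq.symm


private lemma exists_r1 (F : ℝ → ℝ) (r : ℝ) (hr : 0 < r) (hF : AnalyticOnNhd ℝ F (Metric.ball 0 r))
    (d1 : ℝ) (hd : d1 ≠ 0) (F0 : F 0 = 0) (F'0 : deriv F 0 = d1) :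
    ∃ r₁ M : ℝ, 0 < r₁ ∧ r₁ ≤ r ∧ 0 < M ∧ ∀ s ∈ Set.Ioo (0:ℝ) r₁,
      |deriv F s - d1| ≤ |d1|/2 ∧ |deriv (deriv F) s| ≤ M ∧ |F s - d1 * s| ≤ |d1|/2 * s := by
  have h0 : (0:ℝ) ∈ Metric.ball (0:ℝ) r := by simpa using hr
  have hF' := hF.deriv
  have hF'' := hF'.deriv
  have hd1 : 0 < |d1| := abs_pos.mpr hd
  set M : ℝ := |deriv (deriv F) 0| + 1 with hM
  have hMpos : 0 < M := by positivity
  have e1 : ∀ᶠ s in 𝓝 (0:ℝ), |deriv F s - d1| ≤ |d1|/2 := by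
    have hc : ContinuousAt (deriv F) 0 := (hF' 0 h0).continuousAt
    have hball : Metric.closedBall d1 (|d1|/2) ∈ 𝓝 d1 := Metric.closedBall_mem_nhds _ (by positivity)
    have := hc.tendsto
    rw [F'0] at this
    filter_upwards [this.eventually_mem hball] with s hs
    simpa [Real.dist_eq] using hs
  have e2 : ∀ᶠ s in 𝓝 (0:ℝ), |deriv (deriv F) s| ≤ M := by
    have hc : ContinuousAt (deriv (deriv F)) 0 := (hF'' 0 h0).continuousAt
    have hball : Metric.closedBall (deriv (deriv F) 0) 1 ∈ 𝓝 (deriv (deriv F) 0) :=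
      Metric.closedBall_mem_nhds _ one_pos
    filter_upwards [hc.tendsto.eventually_mem hball] with s hs
    have : |deriv (deriv F) s - deriv (deriv F) 0| ≤ 1 := by simpa [Real.dist_eq] using hs
    calc |deriv (deriv F) s| ≤ |deriv (deriv F) s - deriv (deriv F) 0| + |deriv (deriv F) 0| := by
          have := abs_sub_abs_le_abs_sub (deriv (deriv F) s) (deriv (deriv F) 0)
          linarith [abs_nonneg (deriv (deriv F) s - deriv (deriv F) 0)]
      _ ≤ M := by rw [hM]; linarith
  have e3 : ∀ᶠ s in 𝓝[>] (0:ℝ), |F s - d1 * s| ≤ |d1|/2 * s := by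
    have hder : HasDerivAt F d1 0 := by
      have := (hF 0 h0).differentiableAt.hasDerivAt
      rwa [F'0] at this
    rw [hasDerivAt_iff_tendsto_slope] at hder
    have hmono : 𝓝[>] (0:ℝ) ≤ 𝓝[≠] (0:ℝ) :=
      nhdsWithin_mono 0 (fun y hy => ne_of_gt hy)
    have hball : Metric.closedBall d1 (|d1|/2) ∈ 𝓝 d1 := Metric.closedBall_mem_nhds _ (by positivity)
    filter_upwards [(hder.mono_left hmono).eventually_mem hball, self_mem_nhdsWithin] with s hs hs'
    have hspos : 0 < s := hs'
    have hslope : slope F 0 s = F s / s := by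
      rw [slope_def_field, F0]; simp
    have h1 : |F s / s - d1| ≤ |d1|/2 := by
      rw [← hslope]; simpa [Real.dist_eq] using hs
    have : |F s / s - d1| * s ≤ |d1|/2 * s := by
      exact mul_le_mul_of_nonneg_right h1 hspos.le
    have key : F s - d1 * s = (F s / s - d1) * s := by field_simp
    calc |F s - d1 * s| = |F s / s - d1| * s := by rw [key, abs_mul, abs_of_pos hspos]
      _ ≤ |d1|/2 * s := this
  have ev : ∀ᶠ s in 𝓝[>] (0:ℝ),
      |deriv F s - d1| ≤ |d1|/2 ∧ |deriv (deriv F) s| ≤ M ∧ |F s - d1 * s| ≤ |d1|/2 * s :=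
    ((e1.filter_mono nhdsWithin_le_nhds).and ((e2.filter_mono nhdsWithin_le_nhds).and e3)).mono
      (fun s hs => ⟨hs.1, hs.2.1, hs.2.2⟩)
  rw [eventually_iff, mem_nhdsGT_iff_exists_Ioo_subset] at ev
  obtain ⟨u, hu, hsub⟩ := ev
  refine ⟨min u r, M, lt_min hu hr, min_le_right _ _, hMpos, fun s hs => ?_⟩
  exact hsub ⟨hs.1, lt_of_lt_of_le hs.2 (min_le_left _ _)⟩


private lemma Df_bounds (α a d1 : ℝ) (hα : 0 < α) (hα1 : α < 1) (hd1 : 0 < d1)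
    (y t s DF FS : ℝ) (ht : 0 < t) (ht1 : t ≤ 1) (hta : t ≤ |a|/2) (htaa : t ≤ |a| * α/12)
    (hy : y = a + t) (hs : s = t ^ α)
    (hDFl : d1/2 ≤ |DF|) (hDFu : |DF| ≤ 3*d1/2)
    (hFSl : d1/2*s ≤ |FS|) (hFSu : |FS| ≤ 3*d1/2*s) :
    |a| * α * d1/8 * t^(α-1) ≤ |y * (DF * (α * t^(α-1))) - FS| ∧
    |y * (DF * (α * t^(α-1))) - FS| ≤ ((3 * |a|/2) * α * (3*d1/2) + 3*d1/2) * t^(α-1) := by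
  set T : ℝ := t ^ (α-1) with hT
  have hTpos : 0 < T := Real.rpow_pos_of_pos ht _
  have hsT : s = T * t := by
    have h := Real.rpow_add ht (α-1) 1
    rw [Real.rpow_one] at h
    rw [hs, hT, show α = α - 1 + 1 by ring, h]
    norm_num
  have hapos : 0 < |a| := by
    rcases eq_or_ne a 0 with h | h
    · rw [h] at hta; simp at hta; linarith
    · exact abs_pos.mpr h
  have hαT : 0 < α * T := mul_pos hα hTpos
  have hyl : |a|/2 ≤ |y| := by
    have h1 : |a| - |y| ≤ |a - y| := abs_sub_abs_le_abs_sub a y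
    have h2 : |a - y| = t := by rw [hy]; simp [abs_of_pos ht]
    linarith
  have hyu : |y| ≤ 3 * |a|/2 := by
    have h1 : |y| - |a| ≤ |y - a| := abs_sub_abs_le_abs_sub y a
    have h2 : |y - a| = t := by rw [hy]; simp [abs_of_pos ht]
    linarith
  have hmain : |y * (DF * (α * T))| = |y| * (|DF| * (α * T)) := by
    rw [abs_mul, abs_mul, abs_mul, abs_of_pos hα, abs_of_pos hTpos]
  constructor
  · -- lower bound
    have h1 : |a|/2 * (d1/2 * (α * T)) ≤ |y| * (|DF| * (α * T)) := by
      have ha1 : d1/2 * (α * T) ≤ |DF| * (α * T) := mul_le_mul_of_nonneg_right hDFl hαT.le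
      have ha2 : 0 ≤ d1/2 * (α * T) := by
        apply mul_nonneg (by linarith) hαT.le
      exact mul_le_mul hyl ha1 ha2 (abs_nonneg y)
    have h2 : |FS| ≤ |a| * α * d1/8 * T := by
      calc |FS| ≤ 3*d1/2*s := hFSu
        _ = 3*d1/2 * (T * t) := by rw [hsT]
        _ ≤ 3*d1/2 * (T * (|a| * α/12)) := by
            apply mul_le_mul_of_nonneg_left _ (by linarith)
            exact mul_le_mul_of_nonneg_left htaa hTpos.le
        _ = |a| * α * d1/8 * T := by ring
    have h3 : |y * (DF * (α * T))| - |FS| ≤ |y * (DF * (α * T)) - FS| := by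
      have := abs_sub_abs_le_abs_sub (y * (DF * (α * T))) FS
      linarith
    rw [hmain] at h3
    have h4 : |a|/2 * (d1/2 * (α*T)) - |a| * α * d1/8*T = |a| * α * d1/8 * T := by ring
    linarith
  · -- upper bound
    have h1 : |y * (DF * (α * T))| ≤ 3 * |a|/2 * (3*d1/2 * (α * T)) := by
      rw [hmain]
      have ha1 : |DF| * (α * T) ≤ 3*d1/2 * (α * T) := mul_le_mul_of_nonneg_right hDFu hαT.le
      exact mul_le_mul hyu ha1 (mul_nonneg (abs_nonneg DF) hαT.le) (by linarith)
    have h2 : |FS| ≤ 3*d1/2 * T := by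
      calc |FS| ≤ 3*d1/2*s := hFSu
        _ = 3*d1/2 * (T * t) := by rw [hsT]
        _ ≤ 3*d1/2 * (T * 1) := by
            apply mul_le_mul_of_nonneg_left _ (by linarith)
            exact mul_le_mul_of_nonneg_left ht1 hTpos.le
        _ = 3*d1/2 * T := by ring
    have h3 : |y * (DF * (α * T)) - FS| ≤ |y * (DF * (α * T))| + |FS| := abs_sub _ _
    calc |y * (DF * (α * T)) - FS| ≤ 3 * |a|/2 * (3*d1/2 * (α * T)) + 3*d1/2 * T := by linarith
      _ = ((3 * |a|/2) * α * (3*d1/2) + 3*d1/2) * T := by ring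

private lemma f2_ne (α d1 M t s DF DDF : ℝ) (hα : 0 < α) (hα1 : α < 1) (hd1 : 0 < d1) (hM : 0 < M)
    (ht : 0 < t) (hs : s = t^α) (hsβ : s < (1-α)*d1/(2*α*M)) (hDF : d1/2 ≤ |DF|) (hDDF : |DDF| ≤ M) :
    DDF * (α*t^(α-1)) * (α*t^(α-1)) + DF * (α*((α-1)*t^(α-2))) ≠ 0 := by
  set T2 : ℝ := t ^ (α-2) with hT2
  have hT2pos : 0 < T2 := Real.rpow_pos_of_pos ht _
  have hspos : 0 < s := by rw [hs]; exact Real.rpow_pos_of_pos ht _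
  have h1α : 0 < 1 - α := by linarith
  have hTT : t^(α-1) * t^(α-1) = T2 * s := by
    rw [hT2, hs, ← Real.rpow_add ht, ← Real.rpow_add ht]
    congr 1
    ring
  have hfirst : |DDF * (α*t^(α-1)) * (α*t^(α-1))| ≤ M * α * α * (T2 * s) := by
    have he : DDF * (α*t^(α-1)) * (α*t^(α-1)) = DDF * (α * α * (t^(α-1) * t^(α-1))) := by ring
    rw [he, hTT, abs_mul]
    have h2 : |α * α * (T2 * s)| = α * α * (T2 * s) := by
      apply abs_of_pos
      exact mul_pos (mul_pos hα hα) (mul_pos hT2pos hspos)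
    rw [h2]
    have h3 : 0 ≤ α * α * (T2 * s) := le_of_lt (mul_pos (mul_pos hα hα) (mul_pos hT2pos hspos))
    nlinarith [mul_le_mul_of_nonneg_right hDDF h3]
  have hsecond : d1/2 * (α * (1-α) * T2) ≤ |DF * (α*((α-1)*t^(α-2)))| := by
    rw [abs_mul]
    have h1 : |α*((α-1)*T2)| = α * (1-α) * T2 := by
      rw [abs_mul, abs_of_pos hα, abs_mul, abs_of_neg (by linarith : α - 1 < 0), abs_of_pos hT2pos]
      ring
    rw [hT2] at h1
    rw [h1]
    have h3 : 0 ≤ α * (1-α) * T2 := le_of_lt (mul_pos (mul_pos hα h1α) hT2pos)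
    nlinarith [mul_le_mul_of_nonneg_right hDF h3]
  have hstrict : M * α * α * (T2 * s) < d1/2 * (α * (1-α) * T2) := by
    have hαM : 0 < α * M := mul_pos hα hM
    have h1 : M * α * s < (1-α)*d1/2 := by
      have heq : α * M * ((1-α)*d1/(2*α*M)) = (1-α)*d1/2 := by
        field_simp
      calc M * α * s = α * M * s := by ring
        _ < α * M * ((1-α)*d1/(2*α*M)) := mul_lt_mul_of_pos_left hsβ hαM
        _ = (1-α)*d1/2 := heq
    have h2 := mul_lt_mul_of_pos_right h1 (mul_pos hα hT2pos)
    nlinarith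
  intro heq
  have h1 : DF * (α*((α-1)*t^(α-2))) = -(DDF * (α*t^(α-1)) * (α*t^(α-1))) := by linarith [heq]
  have h2 : |DF * (α*((α-1)*t^(α-2)))| = |DDF * (α*t^(α-1)) * (α*t^(α-1))| := by rw [h1, abs_neg]
  linarith

theorem polar_profile_product_bounded (α a : ℝ) (hα : 0 < α) (hα' : α ≤ 1/2) (ha : a ≠ 0)
    (f : ℝ → ℝ) (d : ℕ → ℝ) (hd : d 1 ≠ 0) (δ₀ : ℝ) (hδ₀ : 0 < δ₀)
    (hf : ∀ x ∈ Set.Ioo a (a + δ₀),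
      HasSum (fun j : ℕ => d (j + 1) * |x - a| ^ (α * (j + 1))) (f x)) :
    ∃ δ c C : ℝ, 0 < δ ∧ 0 < c ∧ 0 < C ∧ ∀ x ∈ Set.Ioo a (a + δ),
      (let U : ℝ → ℝ := fun x => deriv f x / (x * deriv f x - f x)
       let h : ℝ → ℝ := fun x => -U x / deriv f x
       let h' : ℝ → ℝ := fun x => deriv h x / deriv U x
       (c * |x - a| ^ (1 - α) ≤ |h x| ∧ |h x| ≤ C * |x - a| ^ (1 - α)) ∧
       (c * |x - a| ^ (-α) ≤ |h' x| ∧ |h' x| ≤ C * |x - a| ^ (-α)) ∧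
       (c * |x - a| ^ (1 - 2 * α) ≤ |h x * h' x| ∧
        |h x * h' x| ≤ C * |x - a| ^ (1 - 2 * α))) := by
  obtain ⟨F, r, hrpos, hF, F0, F'0, hfF⟩ := exists_F α a hα f d δ₀ hδ₀ hf
  obtain ⟨r₁, M, hr₁pos, hr₁r, hMpos, hbounds⟩ := exists_r1 F r hrpos hF (d 1) hd F0 F'0
  have hd1 : 0 < |d 1| := abs_pos.mpr hd
  set d1 : ℝ := |d 1| with hd1def
  have hα1 : α < 1 := by linarith
  have hapos : 0 < |a| := abs_pos.mpr ha
  set β : ℝ := (1 - α) * d1 / (2 * α * M) with hβdef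
  have hβpos : 0 < β :=
    div_pos (mul_pos (by linarith) hd1) (mul_pos (mul_pos two_pos hα) hMpos)
  set ρ : ℝ := min r₁ β with hρdef
  have hρpos : 0 < ρ := lt_min hr₁pos hβpos
  have hρα : 0 < ρ ^ (1/α) := Real.rpow_pos_of_pos hρpos _
  set δ : ℝ := min (min δ₀ 1) (min (ρ ^ (1/α)) (min (|a|/2) (|a| * α/12))) with hδdef
  have hδpos : 0 < δ :=
    lt_min (lt_min hδ₀ one_pos) (lt_min hρα (lt_min (by linarith)
      (div_pos (mul_pos hapos hα) (by norm_num))))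
  have hδδ₀ : δ ≤ δ₀ := le_trans (min_le_left _ _) (min_le_left _ _)
  have hδ1 : δ ≤ 1 := le_trans (min_le_left _ _) (min_le_right _ _)
  have hδρ : δ ≤ ρ ^ (1/α) := le_trans (min_le_right _ _) (min_le_left _ _)
  have hδa : δ ≤ |a|/2 :=
    le_trans (min_le_right _ _) (le_trans (min_le_right _ _) (min_le_left _ _))
  have hδaα : δ ≤ |a| * α/12 :=
    le_trans (min_le_right _ _) (le_trans (min_le_right _ _) (min_le_right _ _))
  -- constants
  set cD : ℝ := |a| * α * d1/8 with hcDdef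
  set CD : ℝ := (3 * |a|/2) * α * (3*d1/2) + 3*d1/2 with hCDdef
  have hcDpos : 0 < cD := by
    rw [hcDdef]
    have := mul_pos (mul_pos hapos hα) hd1
    linarith
  have hCDpos : 0 < CD := by
    rw [hCDdef]
    nlinarith [mul_pos (mul_pos hapos hα) hd1]
  set c1 : ℝ := CD⁻¹ with hc1def
  set C1 : ℝ := cD⁻¹ with hC1def
  set c2 : ℝ := (|a|/2) / (3*d1/2) with hc2def
  set C2 : ℝ := (3 * |a|/2) / (d1/2) with hC2def
  have hc1pos : 0 < c1 := inv_pos.mpr hCDpos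
  have hC1pos : 0 < C1 := inv_pos.mpr hcDpos
  have hc2pos : 0 < c2 := div_pos (by linarith) (by linarith)
  have hC2pos : 0 < C2 := div_pos (by linarith) (by linarith)
  refine ⟨δ, min (min c1 c2) (c1*c2), max (max C1 C2) (C1*C2), hδpos,
    lt_min (lt_min hc1pos hc2pos) (mul_pos hc1pos hc2pos),
    lt_of_lt_of_le hC1pos (le_trans (le_max_left _ _) (le_max_left _ _)), ?_⟩
  set I : Set ℝ := Set.Ioo a (a + δ) with hIdef
  have hII : I ⊆ Set.Ioo a (a + δ₀) := fun y hy => ⟨hy.1, lt_of_lt_of_le hy.2 (by linarith)⟩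
  have hyt : ∀ y ∈ I, 0 < y - a ∧ y - a < δ := by
    intro y hy
    exact ⟨sub_pos.mpr hy.1, by have := hy.2; linarith⟩
  have hsmem : ∀ y ∈ I, (y - a) ^ α < ρ := by
    intro y hy
    obtain ⟨ht, htδ⟩ := hyt y hy
    have h1 : (y - a) ^ α < (ρ ^ (1/α)) ^ α :=
      Real.rpow_lt_rpow ht.le (lt_of_lt_of_le htδ hδρ) hα
    have h2 : (ρ ^ (1/α)) ^ α = ρ := by
      rw [← Real.rpow_mul hρpos.le, one_div, inv_mul_cancel₀ (ne_of_gt hα), Real.rpow_one]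
    rwa [h2] at h1
  have hsρ : ∀ y ∈ I, (y-a)^α ∈ Set.Ioo (0:ℝ) r₁ ∧ (y-a)^α < β := by
    intro y hy
    have h := hsmem y hy
    have hpos := Real.rpow_pos_of_pos (hyt y hy).1 α
    exact ⟨⟨hpos, lt_of_lt_of_le h (min_le_left _ _)⟩, lt_of_lt_of_le h (min_le_right _ _)⟩
  have hsball : ∀ y ∈ I, (y-a)^α ∈ Metric.ball (0:ℝ) r := by
    intro y hy
    have h := (hsρ y hy).1
    rw [Metric.mem_ball, Real.dist_eq, sub_zero, abs_of_pos h.1]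
    exact lt_of_lt_of_le h.2 hr₁r
  -- derivative of f on I
  have key1 : ∀ y ∈ I, HasDerivAt f (deriv F ((y-a)^α) * (α * (y-a)^(α-1))) y := by
    intro y hy
    have ht := (hyt y hy).1
    have hFd : HasDerivAt F (deriv F ((y-a)^α)) ((y-a)^α) :=
      ((hF _ (hsball y hy)).differentiableAt).hasDerivAt
    have h1 : HasDerivAt (fun z : ℝ => z - a) 1 y := (hasDerivAt_id y).sub_const a
    have h2 : HasDerivAt (fun u : ℝ => u ^ α) (α * (y-a)^(α-1)) (y - a) :=
      Real.hasDerivAt_rpow_const (Or.inl (ne_of_gt ht))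
    have hφ : HasDerivAt (fun z : ℝ => (z - a) ^ α) (α * (y-a)^(α-1)) y := by
      have := h2.comp y h1
      exact this.congr_deriv (mul_one _)
    have hcomp : HasDerivAt (fun z : ℝ => F ((z-a)^α)) (deriv F ((y-a)^α) * (α * (y-a)^(α-1))) y :=
      hFd.comp y hφ
    apply hcomp.congr_of_eventuallyEq
    filter_upwards [isOpen_Ioo.mem_nhds (hII hy)] with z hz
    exact hfF z hz
  have key2 : ∀ y ∈ I, deriv f y = deriv F ((y-a)^α) * (α * (y-a)^(α-1)) :=
    fun y hy => (key1 y hy).deriv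
  -- bounds on F, F' at the points of interest
  have keyFb : ∀ y ∈ I, d1/2 ≤ |deriv F ((y-a)^α)| ∧ |deriv F ((y-a)^α)| ≤ 3*d1/2 ∧
      d1/2 * ((y-a)^α) ≤ |F ((y-a)^α)| ∧ |F ((y-a)^α)| ≤ 3*d1/2 * ((y-a)^α) := by
    intro y hy
    obtain ⟨hb1, hb2, hb3⟩ := hbounds _ (hsρ y hy).1
    have hspos : 0 < (y-a)^α := (hsρ y hy).1.1
    have ht1 : |d 1| - |deriv F ((y-a)^α)| ≤ |deriv F ((y-a)^α) - d 1| := by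
      have := abs_sub_abs_le_abs_sub (d 1) (deriv F ((y-a)^α))
      rw [abs_sub_comm] at this
      linarith
    have ht2 : |deriv F ((y-a)^α)| - |d 1| ≤ |deriv F ((y-a)^α) - d 1| :=
      abs_sub_abs_le_abs_sub _ _
    have hds : |d 1 * ((y-a)^α)| = d1 * ((y-a)^α) := by
      rw [abs_mul, abs_of_pos hspos, hd1def]
    have ht3 : |d 1 * ((y-a)^α)| - |F ((y-a)^α)| ≤ |F ((y-a)^α) - d 1 * ((y-a)^α)| := by
      have := abs_sub_abs_le_abs_sub (d 1 * ((y-a)^α)) (F ((y-a)^α))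
      rw [abs_sub_comm] at this
      linarith
    have ht4 : |F ((y-a)^α)| - |d 1 * ((y-a)^α)| ≤ |F ((y-a)^α) - d 1 * ((y-a)^α)| :=
      abs_sub_abs_le_abs_sub _ _
    rw [hds] at ht3 ht4
    refine ⟨by linarith, by linarith, by nlinarith, by nlinarith⟩
  -- bounds on the denominator x f' - f
  have keyDb : ∀ y ∈ I, cD * (y-a)^(α-1) ≤ |y * deriv f y - f y| ∧
      |y * deriv f y - f y| ≤ CD * (y-a)^(α-1) := by
    intro y hy
    obtain ⟨ht, htδ⟩ := hyt y hy
    obtain ⟨hb1, hb2, hb3, hb4⟩ := keyFb y hy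
    rw [key2 y hy, hfF y (hII hy)]
    exact Df_bounds α a d1 hα hα1 hd1 y (y-a) ((y-a)^α) (deriv F ((y-a)^α)) (F ((y-a)^α))
      ht (le_of_lt (lt_of_lt_of_le htδ hδ1)) (le_of_lt (lt_of_lt_of_le htδ hδa))
      (le_of_lt (lt_of_lt_of_le htδ hδaα)) (by ring) rfl hb1 hb2 hb3 hb4
  have keyDne : ∀ y ∈ I, y * deriv f y - f y ≠ 0 := by
    intro y hy
    have h1 := (keyDb y hy).1
    have h2 : 0 < cD * (y-a)^(α-1) := mul_pos hcDpos (Real.rpow_pos_of_pos (hyt y hy).1 _)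
    intro h
    rw [h] at h1
    simp at h1
    linarith
  have keydfne : ∀ y ∈ I, deriv f y ≠ 0 := by
    intro y hy
    rw [key2 y hy]
    have hFne : deriv F ((y-a)^α) ≠ 0 := by
      have := (keyFb y hy).1
      intro h
      rw [h] at this
      simp at this
      linarith
    exact mul_ne_zero hFne (mul_ne_zero (ne_of_gt hα)
      (ne_of_gt (Real.rpow_pos_of_pos (hyt y hy).1 _)))
  have keyfne : ∀ y ∈ I, f y ≠ 0 := by
    intro y hy
    rw [hfF y (hII hy)]
    have h1 := (keyFb y hy).2.2.1
    have hspos : 0 < (y-a)^α := (hsρ y hy).1.1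
    intro h
    rw [h] at h1
    simp at h1
    nlinarith
  have keyh : ∀ y ∈ I, -(deriv f y / (y * deriv f y - f y)) / deriv f y
      = -((y * deriv f y - f y)⁻¹) := by
    intro y hy
    rw [neg_div, neg_inj, div_div, mul_comm, ← div_div, div_self (keydfne y hy), one_div]
  -- now fix x
  intro x hx
  dsimp only
  obtain ⟨ht, htδ⟩ := hyt x hx
  have habs : |x - a| = x - a := abs_of_pos ht
  rw [habs]
  have hspos : 0 < (x - a) ^ α := (hsρ x hx).1.1
  have hTpos : 0 < (x - a) ^ (α - 1) := Real.rpow_pos_of_pos ht _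
  -- second derivative of f at x
  have hF'd : HasDerivAt (deriv F) (deriv (deriv F) ((x-a)^α)) ((x-a)^α) :=
    (((hF.deriv) _ (hsball x hx)).differentiableAt).hasDerivAt
  have h1' : HasDerivAt (fun z : ℝ => z - a) 1 x := (hasDerivAt_id x).sub_const a
  have hφ : HasDerivAt (fun z : ℝ => (z - a) ^ α) (α * (x-a)^(α-1)) x := by
    have h2 : HasDerivAt (fun u : ℝ => u ^ α) (α * (x-a)^(α-1)) (x - a) :=
      Real.hasDerivAt_rpow_const (Or.inl (ne_of_gt ht))
    have := h2.comp x h1'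
    exact this.congr_deriv (mul_one _)
  have hψ : HasDerivAt (fun z : ℝ => α * (z-a)^(α-1)) (α * ((α-1) * (x-a)^(α-2))) x := by
    have h2 : HasDerivAt (fun u : ℝ => u ^ (α-1)) ((α-1) * (x-a)^(α-1-1)) (x - a) :=
      Real.hasDerivAt_rpow_const (Or.inl (ne_of_gt ht))
    have he : α - 1 - 1 = α - 2 := by ring
    rw [he] at h2
    have h3 := h2.comp x h1'
    have h4 : HasDerivAt (fun z : ℝ => (z-a)^(α-1)) ((α-1) * (x-a)^(α-2)) x := by exact h3.congr_deriv (mul_one _)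
    simpa using h4.const_mul α
  have hcomp1 : HasDerivAt (fun z : ℝ => deriv F ((z-a)^α))
      (deriv (deriv F) ((x-a)^α) * (α * (x-a)^(α-1))) x := by have := hF'd.comp x hφ; exact this
  have hprod : HasDerivAt (fun z : ℝ => deriv F ((z-a)^α) * (α * (z-a)^(α-1)))
      (deriv (deriv F) ((x-a)^α) * (α * (x-a)^(α-1)) * (α * (x-a)^(α-1))
        + deriv F ((x-a)^α) * (α * ((α-1) * (x-a)^(α-2)))) x := hcomp1.mul hψ
  have hd2 : HasDerivAt (deriv f)
      (deriv (deriv F) ((x-a)^α) * (α * (x-a)^(α-1)) * (α * (x-a)^(α-1))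
        + deriv F ((x-a)^α) * (α * ((α-1) * (x-a)^(α-2)))) x := by
    apply hprod.congr_of_eventuallyEq
    filter_upwards [isOpen_Ioo.mem_nhds hx] with z hz
    exact key2 z hz
  have hfd : HasDerivAt f (deriv f x) x := by
    rw [key2 x hx]
    exact key1 x hx
  set f2x : ℝ := deriv (deriv F) ((x-a)^α) * (α * (x-a)^(α-1)) * (α * (x-a)^(α-1))
      + deriv F ((x-a)^α) * (α * ((α-1) * (x-a)^(α-2))) with hf2xdef
  have hDfun : HasDerivAt (fun z : ℝ => z * deriv f z - f z) (x * f2x) x := by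
    have h := ((hasDerivAt_id' x).mul hd2).sub hfd
    exact h.congr_deriv (by ring)
  have hDne := keyDne x hx
  have hdfne := keydfne x hx
  have hfxne := keyfne x hx
  have hf2ne : f2x ≠ 0 := by
    rw [hf2xdef]
    refine f2_ne α d1 M (x-a) ((x-a)^α) (deriv F ((x-a)^α)) (deriv (deriv F) ((x-a)^α))
      hα hα1 hd1 hMpos ht rfl ?_ (keyFb x hx).1 (hbounds _ (hsρ x hx).1).2.1
    rw [← hβdef]
    exact (hsρ x hx).2
  -- deriv U x
  have hU : HasDerivAt (fun z : ℝ => deriv f z / (z * deriv f z - f z))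
      ((f2x * (x * deriv f x - f x) - deriv f x * (x * f2x)) / (x * deriv f x - f x)^2) x :=
    hd2.div hDfun hDne
  have hUval : deriv (fun z : ℝ => deriv f z / (z * deriv f z - f z)) x
      = -(f x * f2x) / (x * deriv f x - f x)^2 := by
    rw [hU.deriv]
    congr 1
    ring
  -- deriv h x
  have hhf : (fun z : ℝ => -(deriv f z / (z * deriv f z - f z)) / deriv f z)
      =ᶠ[𝓝 x] (fun z : ℝ => -((z * deriv f z - f z)⁻¹)) := by
    filter_upwards [isOpen_Ioo.mem_nhds hx] with z hz
    exact keyh z hz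
  have hinv : HasDerivAt (fun z : ℝ => -((z * deriv f z - f z)⁻¹))
      (x * f2x / (x * deriv f x - f x)^2) x := by
    have := (hDfun.inv hDne).neg
    exact this.congr_deriv (by ring)
  have hderivh : deriv (fun z : ℝ => -(deriv f z / (z * deriv f z - f z)) / deriv f z) x
      = x * f2x / (x * deriv f x - f x)^2 := by
    rw [hhf.deriv_eq]
    exact hinv.deriv
  -- value of h at x
  have hhval : -(deriv f x / (x * deriv f x - f x)) / deriv f x
      = -((x * deriv f x - f x)⁻¹) := keyh x hx
  -- value of h' at x
  have hD2ne : (x * deriv f x - f x)^2 ≠ 0 := pow_ne_zero _ hDne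
  have hh'val : deriv (fun z : ℝ => -(deriv f z / (z * deriv f z - f z)) / deriv f z) x
      / deriv (fun z : ℝ => deriv f z / (z * deriv f z - f z)) x = -x / f x := by
    rw [hderivh, hUval]
    field_simp
  rw [hhval, hh'val]
  -- absolute values
  have e1 : |(-((x * deriv f x - f x)⁻¹))| = |x * deriv f x - f x|⁻¹ := by
    rw [abs_neg, abs_inv]
  have e2 : |(-x / f x)| = |x| / |F ((x-a)^α)| := by
    rw [abs_div, abs_neg, hfF x (hII hx)]
  have e3 : |(-((x * deriv f x - f x)⁻¹)) * (-x / f x)|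
      = |x * deriv f x - f x|⁻¹ * (|x| / |F ((x-a)^α)|) := by
    rw [abs_mul, e1, e2]
  rw [e1, e2, e3]
  -- bounds
  have hDlow := (keyDb x hx).1
  have hDhigh := (keyDb x hx).2
  have hDpos : 0 < |x * deriv f x - f x| := lt_of_lt_of_le (mul_pos hcDpos hTpos) hDlow
  have hTinv : ((x-a)^(α-1))⁻¹ = (x-a)^(1-α) := by
    rw [show (1:ℝ)-α = -(α-1) by ring, Real.rpow_neg ht.le]
  have hsinv : ((x-a)^α)⁻¹ = (x-a)^(-α) := by
    rw [Real.rpow_neg ht.le]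
  have hXpos : 0 < (x-a)^((1:ℝ)-α) := Real.rpow_pos_of_pos ht _
  have hYpos : 0 < (x-a)^(-α) := Real.rpow_pos_of_pos ht _
  -- h bounds
  have hb1 : c1 * (x-a)^((1:ℝ)-α) ≤ |x * deriv f x - f x|⁻¹ := by
    have h1 : (1:ℝ)/(CD * ((x-a)^(α-1))) ≤ 1/|x * deriv f x - f x| :=
      one_div_le_one_div_of_le hDpos hDhigh
    have h2 : (1:ℝ)/(CD * ((x-a)^(α-1))) = c1 * (x-a)^((1:ℝ)-α) := by
      rw [hc1def, one_div, mul_inv, hTinv]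
    rw [← h2, ← one_div]
    exact h1
  have hb2 : |x * deriv f x - f x|⁻¹ ≤ C1 * (x-a)^((1:ℝ)-α) := by
    have h0 : 0 < cD * ((x-a)^(α-1)) := mul_pos hcDpos hTpos
    have h1 : (1:ℝ)/|x * deriv f x - f x| ≤ 1/(cD * ((x-a)^(α-1))) :=
      one_div_le_one_div_of_le h0 hDlow
    have h2 : (1:ℝ)/(cD * ((x-a)^(α-1))) = C1 * (x-a)^((1:ℝ)-α) := by
      rw [hC1def, one_div, mul_inv, hTinv]
    rw [← h2, ← one_div]
    exact h1
  -- h' bounds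
  have hxal : |a|/2 ≤ |x| := by
    have h1 : |a| - |x| ≤ |a - x| := abs_sub_abs_le_abs_sub a x
    have h2 : |a - x| = x - a := by rw [abs_sub_comm]; exact habs
    have h3 : x - a < |a|/2 := lt_of_lt_of_le htδ hδa
    linarith
  have hxau : |x| ≤ 3 * |a|/2 := by
    have h1 : |x| - |a| ≤ |x - a| := abs_sub_abs_le_abs_sub x a
    have h3 : x - a < |a|/2 := lt_of_lt_of_le htδ hδa
    rw [habs] at h1
    linarith
  obtain ⟨hFb1, hFb2, hFb3, hFb4⟩ := keyFb x hx
  have hFpos : 0 < |F ((x-a)^α)| := lt_of_lt_of_le (mul_pos (div_pos hd1 two_pos) hspos) hFb3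
  have hb3 : c2 * (x-a)^(-α) ≤ |x| / |F ((x-a)^α)| := by
    have h1 : (|a|/2) / (3*d1/2 * ((x-a)^α)) ≤ |x| / |F ((x-a)^α)| :=
      div_le_div₀ (abs_nonneg x) hxal hFpos hFb4
    have h2 : (|a|/2) / (3*d1/2 * ((x-a)^α)) = c2 * (x-a)^(-α) := by
      rw [hc2def, div_mul_eq_div_div, div_eq_mul_inv (|a|/2/(3*d1/2)), hsinv]
    rwa [h2] at h1
  have hb4 : |x| / |F ((x-a)^α)| ≤ C2 * (x-a)^(-α) := by
    have h0 : 0 < d1/2 * ((x-a)^α) := mul_pos (div_pos hd1 two_pos) hspos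
    have h1 : |x| / |F ((x-a)^α)| ≤ (3 * |a|/2) / (d1/2 * ((x-a)^α)) :=
      div_le_div₀ (by linarith) hxau h0 hFb3
    have h2 : (3 * |a|/2) / (d1/2 * ((x-a)^α)) = C2 * (x-a)^(-α) := by
      rw [hC2def, div_mul_eq_div_div, div_eq_mul_inv (3*|a|/2/(d1/2)), hsinv]
    rwa [h2] at h1
  -- product
  have hXY : (x-a)^((1:ℝ)-α) * (x-a)^(-α) = (x-a)^(1-2*α) := by
    rw [← Real.rpow_add ht]
    congr 1
    ring
  have hmin1 : min (min c1 c2) (c1*c2) ≤ c1 := le_trans (min_le_left _ _) (min_le_left _ _)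
  have hmin2 : min (min c1 c2) (c1*c2) ≤ c2 := le_trans (min_le_left _ _) (min_le_right _ _)
  have hmin3 : min (min c1 c2) (c1*c2) ≤ c1*c2 := min_le_right _ _
  have hmax1 : C1 ≤ max (max C1 C2) (C1*C2) := le_trans (le_max_left _ _) (le_max_left _ _)
  have hmax2 : C2 ≤ max (max C1 C2) (C1*C2) := le_trans (le_max_right _ _) (le_max_left _ _)
  have hmax3 : C1*C2 ≤ max (max C1 C2) (C1*C2) := le_max_right _ _
  refine ⟨⟨?_, ?_⟩, ⟨?_, ?_⟩, ?_, ?_⟩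
  · calc min (min c1 c2) (c1*c2) * (x-a)^((1:ℝ)-α) ≤ c1 * (x-a)^((1:ℝ)-α) :=
          mul_le_mul_of_nonneg_right hmin1 hXpos.le
      _ ≤ _ := hb1
  · calc |x * deriv f x - f x|⁻¹ ≤ C1 * (x-a)^((1:ℝ)-α) := hb2
      _ ≤ max (max C1 C2) (C1*C2) * (x-a)^((1:ℝ)-α) :=
          mul_le_mul_of_nonneg_right hmax1 hXpos.le
  · calc min (min c1 c2) (c1*c2) * (x-a)^(-α) ≤ c2 * (x-a)^(-α) :=
          mul_le_mul_of_nonneg_right hmin2 hYpos.le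
      _ ≤ _ := hb3
  · calc |x| / |F ((x-a)^α)| ≤ C2 * (x-a)^(-α) := hb4
      _ ≤ max (max C1 C2) (C1*C2) * (x-a)^(-α) :=
          mul_le_mul_of_nonneg_right hmax2 hYpos.le
  · calc min (min c1 c2) (c1*c2) * (x-a)^((1:ℝ)-2*α)
        ≤ (c1*c2) * (x-a)^((1:ℝ)-2*α) :=
          mul_le_mul_of_nonneg_right hmin3 (Real.rpow_pos_of_pos ht _).le
      _ = (c1 * (x-a)^((1:ℝ)-α)) * (c2 * (x-a)^(-α)) := by
          rw [← hXY]; ring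
      _ ≤ |x * deriv f x - f x|⁻¹ * (|x| / |F ((x-a)^α)|) := by
          apply mul_le_mul hb1 hb3 (mul_nonneg hc2pos.le hYpos.le) (inv_nonneg.mpr hDpos.le)
  · calc |x * deriv f x - f x|⁻¹ * (|x| / |F ((x-a)^α)|)
        ≤ (C1 * (x-a)^((1:ℝ)-α)) * (C2 * (x-a)^(-α)) := by
          apply mul_le_mul hb2 hb4 (div_nonneg (abs_nonneg x) hFpos.le) (by positivity)
      _ = (C1*C2) * (x-a)^((1:ℝ)-2*α) := by
          rw [← hXY]; ring
      _ ≤ max (max C1 C2) (C1*C2) * (x-a)^((1:ℝ)-2*α) :=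
          mul_le_mul_of_nonneg_right hmax3 (Real.rpow_pos_of_pos ht _).le
end
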